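/- (Lemma 2, third case.) If 0 < a12 ≤ ι(α), then R2(q(κ), κ) ≤ R2(q(0), 0) for all κ ∈ [0,1). -/

import Mathlib

set_option maxHeartbeats 1600000 in
/-- Core algebraic lemma. -/
lemma stmt10_aux_key (P1 g1 g2 σ ι X0 x κ : ℝ)
    (hg1 : 0 < g1) (hg1P : g1 < P1) (hg2 : g2 = g1^2 + 2*g1)
    (h2P : 2*P1 < g2) (hσ0 : 0 ≤ σ) (hσ2 : σ^2 = g2 - 2*P1)
    (hιm : ι * ((g2-g1)*(σ-g1)^2) = (P1-g1)^2) (hιpos : 0 < ι)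
    (hX0 : X0 * g1 = P1 - g1)
    (hκ0 : 0 ≤ κ) (hκ1 : κ < 1) (hx : 0 ≤ x) (hxκ : x*κ ≤ P1)
    (hA : (1+g2)*((1-κ^2)*x^2) ≤ x^2 - 2*(g2-P1)*x + (P1^2+2*P1-g2)) :
    (1-κ^2)*x^2 + 2*ι*(x - X0) ≤ X0^2 := by
  subst hg2
  have hσlt : σ < g1 := by nlinarith
  have hX0pos : 0 < X0 := by
    by_contra hc
    push_neg at hc
    have : X0 * g1 ≤ 0 := mul_nonpos_of_nonpos_of_nonneg hc hg1.le
    linarith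
  set s1 : ℝ := g1^2 + 2*g1 - P1 - (1+g1)*σ with hs1def
  set s2 : ℝ := g1^2 + 2*g1 - P1 + (1+g1)*σ with hs2def
  have hs12 : ∀ y : ℝ, y^2 - 2*((g1^2+2*g1)-P1)*y + (P1^2+2*P1-(g1^2+2*g1))
      = (y - s1)*(y - s2) := by
    intro y
    rw [hs1def, hs2def]
    linear_combination ((1+g1)^2) * hσ2
  have h1 : 2*(s1 - X0)*g1^2 = ((g1^2+2*g1)-g1)*(σ-g1)^2 := by
    rw [hs1def]
    linear_combination (-(g1^2+g1)) * hσ2 + (-2*g1) * hX0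
  have hs1X0 : X0 < s1 := by
    have hpos : 0 < ((g1^2+2*g1)-g1)*(σ-g1)^2 := by
      have h := pow_pos (show (0:ℝ) < g1 - σ by linarith) 2
      nlinarith
    nlinarith
  have hs1X : 2*ι*(s1 - X0) = X0^2 := by
    have h2 : (2*ι*(s1-X0)) * g1^2 = X0^2 * g1^2 := by
      calc (2*ι*(s1-X0))*g1^2 = ι * (2*(s1-X0)*g1^2) := by ring
      _ = ι * (((g1^2+2*g1)-g1)*(σ-g1)^2) := by rw [h1]
      _ = (P1-g1)^2 := hιm
      _ = X0^2*g1^2 := by rw [← hX0]; ring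
    exact mul_right_cancel₀ (pow_ne_zero 2 hg1.ne') h2
  have hS : (s2 - X0)*(s1 - X0) = (1+(g1^2+2*g1))*X0^2 := by
    rw [hs1def, hs2def]
    linear_combination (-(1+g1)^2) * hσ2 + (-(g1+2)*X0 - (2+P1+g1)) * hX0
  have hs2X : s2 - X0 = 2*ι*(1+(g1^2+2*g1)) := by
    have h3 : (s2 - X0)*(s1-X0) = (2*ι*(1+(g1^2+2*g1)))*(s1-X0) := by
      rw [hS, ← hs1X]; ring
    exact mul_right_cancel₀ (sub_ne_zero.mpr (ne_of_gt hs1X0)) h3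
  rcases le_or_gt x X0 with hxle | hxgt
  · have h5 : (1-κ^2)*x^2 ≤ x^2 := by nlinarith [mul_nonneg (sq_nonneg κ) (sq_nonneg x)]
    have h6 : x^2 ≤ X0^2 := by nlinarith
    nlinarith [mul_nonneg hιpos.le (sub_nonneg.mpr hxle)]
  · have hApoly : (1+(g1^2+2*g1))*((1-κ^2)*x^2) ≤ (x - s1)*(x - s2) := by
      rw [← hs12 x]; exact hA
    have hκsq : κ^2 ≤ 1 := by nlinarith
    have hw0 : 0 ≤ (1-κ^2)*x^2 := mul_nonneg (by linarith) (sq_nonneg x)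
    have hwP : x^2 - P1^2 ≤ (1-κ^2)*x^2 := by
      have h0 : 0 ≤ x*κ := mul_nonneg hx hκ0
      nlinarith
    have hTpos : (0:ℝ) < 1+(g1^2+2*g1) := by positivity
    have hxs1 : x ≤ s1 := by
      by_contra hc
      push_neg at hc
      rcases lt_or_ge x s2 with hlt | hge
      · have hneg : (x - s1)*(x - s2) < 0 :=
          mul_neg_of_pos_of_neg (by linarith) (by linarith)
        nlinarith
      · have hs2g : (g1^2+2*g1) - P1 ≤ s2 := by
          rw [hs2def]; nlinarith
        have hxP1 : P1 < x := by nlinarith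
        nlinarith [mul_le_mul_of_nonneg_left hwP hTpos.le,
          mul_nonneg (mul_nonneg (show (0:ℝ) ≤ g1^2+2*g1 by positivity)
            (show (0:ℝ) ≤ x - P1 by linarith)) (show (0:ℝ) ≤ x + P1 by linarith),
          mul_nonneg (show (0:ℝ) ≤ g1^2+2*g1-2*P1 by linarith) hx,
          mul_pos (show (0:ℝ) < g1^2+2*g1-2*P1 by linarith) (show (0:ℝ) < x by linarith)]
    have hkey : (s1 - x)*(s2 - x) ≤ (s1 - x)*(2*ι*(1+(g1^2+2*g1))) := by
      apply mul_le_mul_of_nonneg_left _ (by linarith)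
      rw [← hs2X]; linarith
    have hfin : (1+(g1^2+2*g1))*((1-κ^2)*x^2) ≤ (1+(g1^2+2*g1))*(2*ι*(s1 - x)) := by
      calc (1+(g1^2+2*g1))*((1-κ^2)*x^2) ≤ (x-s1)*(x-s2) := hApoly
      _ = (s1-x)*(s2-x) := by ring
      _ ≤ (s1-x)*(2*ι*(1+(g1^2+2*g1))) := hkey
      _ = (1+(g1^2+2*g1))*(2*ι*(s1-x)) := by ring
    have h7 : (1-κ^2)*x^2 ≤ 2*ι*(s1 - x) := le_of_mul_le_mul_left hfin hTpos
    nlinarith [hs1X]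


lemma stmt10_aux_branchB (P1 g2 x k : ℝ) (hP1 : 0 < P1) (h2P : 2*P1 < g2)
    (hx : 0 ≤ x) (hk0 : 0 ≤ k) (hk1 : k < 1) :
    2*P1*(x*(1+k)+1) < g2*(1+x*(x*(1-k^2)+2)) := by
  have hk2 : 0 < 1-k^2 := by nlinarith
  have hPk : P1*k ≤ P1 := by
    have h := mul_le_mul_of_nonneg_left hk1.le hP1.le
    linarith [h]
  have h1 : 0 ≤ (g2 - P1 - P1*k)*x := mul_nonneg (by linarith) hx
  have h2 : 0 ≤ g2*((x*x)*(1-k^2)) :=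
    mul_nonneg (by linarith) (mul_nonneg (mul_nonneg hx hx) hk2.le)
  nlinarith [h1, h2]

lemma stmt10_aux_leX0 (P1 g2 X0 x : ℝ) (hP1 : 0 < P1) (hx : 0 ≤ x) (hX0 : 0 < X0) (hPg : P1 < g2)
    (hroot : g2*X0^2 + 2*(g2-P1)*X0 - (P1^2+2*P1-g2) = 0)
    (hA0 : (1+g2)*((1-(0:ℝ)^2)*x^2) ≤ x^2 - 2*(g2-P1)*x + (P1^2+2*P1-g2)) :
    x ≤ X0 := by
  by_contra hc
  push_neg at hc
  have hf : 0 < g2*(x+X0)+2*(g2-P1) := by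
    have h := mul_pos (show (0:ℝ) < g2 by linarith) (show (0:ℝ) < x + X0 by linarith)
    linarith
  nlinarith [mul_pos (sub_pos.mpr hc) hf]

lemma stmt10_aux_mono (c a x b : ℝ) (hc : 0 < c) (ha : 0 < a)
    (hx : 0 ≤ x) (hb : 0 ≤ b) (hxb : x ≤ b) :
    c*x^2 + 2*a*x ≤ c*b^2 + 2*a*b := by
  nlinarith [mul_nonneg (mul_nonneg hc.le (sub_nonneg.mpr hxb)) (add_nonneg hx hb),
    mul_nonneg ha.le (sub_nonneg.mpr hxb)]

lemma stmt10_aux_mono' (c a x b : ℝ) (hc : 0 < c) (ha : 0 < a)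
    (hx : 0 ≤ x) (hb : 0 ≤ b) (h : c*x^2 + 2*a*x ≤ c*b^2 + 2*a*b) :
    x ≤ b := by
  by_contra hcc
  push_neg at hcc
  nlinarith [mul_pos (mul_pos hc (sub_pos.mpr hcc)) (show 0 < x + b by nlinarith),
    mul_pos ha (sub_pos.mpr hcc)]

set_option maxHeartbeats 1600000 in
/-- Lemma 2, third case: If `0 < a12 ≤ ι(α)`, then
`R2(q(κ), κ) ≤ R2(q(0), 0)` for all `κ ∈ [0,1)`. -/
theorem stmt10 (P1 P2 a12 α Rbar γ1 γ2 ι : ℝ)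
    (hP1 : 0 < P1) (hP2 : 0 < P2) (ha12 : 0 < a12) (hα : α ∈ Set.Ioo (0:ℝ) 1)
    (hRbar : Rbar = α * Real.logb 2 (1 + P1))
    (hγ1 : γ1 = (1 + P1) ^ α - 1) (hγ2 : γ2 = (1 + P1) ^ (2 * α) - 1)
    (R2 : ℝ → ℝ → ℝ)
    (hR2 : ∀ p κ, R2 p κ = (1 / 2) * Real.logb 2 (1 + p * (p * (1 - κ ^ 2) + 2)))
    (R1A : ℝ → ℝ → ℝ)
    (hR1A : ∀ p κ, R1A p κ = (1 / 2) * Real.logb 2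
        ((p * a12 + P1 + 1) ^ 2 / (1 + p * a12 * (p * a12 * (1 - κ ^ 2) + 2))))
    (R1B : ℝ → ℝ → ℝ)
    (hR1B : ∀ p κ, R1B p κ = (1 / 2) * Real.logb 2
        (1 + 2 * P1 * (p * a12 * (1 + κ) + 1)
            / (1 + p * a12 * (p * a12 * (1 - κ ^ 2) + 2))))
    (Ψ : ℝ → ℝ → ℝ)
    (hΨ : ∀ p κ, Ψ p κ = if p * κ * a12 < P1 then R1A p κ else R1B p κ)
    (q : ℝ → ℝ)
    (hq : ∀ κ, q κ = sSup {p : ℝ | 0 ≤ p ∧ Ψ p κ ≥ Rbar})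
    (hι : ι = if 2 * P1 < γ2 then
        (P1 - γ1) ^ 2 / ((γ2 - γ1) * (Real.sqrt (γ2 - 2 * P1) - γ1) ^ 2) else 0)
    (ha : a12 ≤ ι) :
    ∀ κ ∈ Set.Ico (0:ℝ) 1, R2 (q κ) κ ≤ R2 (q 0) 0 := by
  obtain ⟨hα0, hα1⟩ := hα
  have h0P : (0:ℝ) < 1 + P1 := by linarith
  have h1P : (1:ℝ) < 1 + P1 := by linarith
  have hg1pos : 0 < γ1 := by
    rw [hγ1]
    have : (1:ℝ) < (1+P1) ^ α := (Real.one_lt_rpow_iff_of_pos h0P).mpr (Or.inl ⟨h1P, hα0⟩)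
    linarith
  have hg1P : γ1 < P1 := by
    rw [hγ1]
    have h := Real.rpow_lt_rpow_of_exponent_lt h1P hα1
    rw [Real.rpow_one] at h
    linarith
  have hg2eq : γ2 = γ1^2 + 2*γ1 := by
    rw [hγ2, hγ1]
    have h : (1+P1) ^ (2*α) = ((1+P1)^α)^2 := by
      rw [mul_comm, Real.rpow_mul h0P.le, Real.rpow_two]
    rw [h]; ring
  have h2P : 2*P1 < γ2 := by
    by_contra hc
    rw [hι, if_neg hc] at ha
    linarith
  set σ := Real.sqrt (γ2 - 2*P1) with hσdef
  have hσ2 : σ^2 = γ2 - 2*P1 := Real.sq_sqrt (by linarith)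
  have hσ0 : 0 ≤ σ := Real.sqrt_nonneg _
  have hσlt : σ < γ1 := by
    by_contra hcs
    push_neg at hcs
    have h := pow_le_pow_left₀ hg1pos.le hcs 2
    linarith
  have hιeq : ι = (P1-γ1)^2/((γ2-γ1)*(σ - γ1)^2) := by rw [hι, if_pos h2P]
  have hden : 0 < (γ2-γ1)*(σ-γ1)^2 := by
    have h := pow_pos (show (0:ℝ) < γ1 - σ by linarith) 2
    have e : (σ-γ1)^2 = (γ1-σ)^2 := by ring
    have hgg : 0 < γ2 - γ1 := by
      have := pow_pos hg1pos 2
      linarith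
    rw [e]
    exact mul_pos hgg h
  have hιm : ι * ((γ2-γ1)*(σ-γ1)^2) = (P1-γ1)^2 := by
    rw [hιeq]; exact div_mul_cancel₀ _ hden.ne'
  have hιpos : 0 < ι := by
    rw [hιeq]; exact div_pos (pow_pos (by linarith) 2) hden
  set X0 := (P1-γ1)/γ1 with hX0def
  have hX0g : X0 * γ1 = P1-γ1 := div_mul_cancel₀ _ hg1pos.ne'
  have hX0pos : 0 < X0 := div_pos (by linarith) hg1pos
  have hT1 : (1:ℝ) < 1 + γ2 := by linarith
  have hlog2 : Real.logb 2 (1+γ2) = Rbar + Rbar := by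
    have h : (1:ℝ)+γ2 = (1+P1) ^ (2*α) := by rw [hγ2]; ring
    rw [h, hRbar, Real.logb_rpow_eq_mul_logb_of_pos h0P]; ring
  have hrootX0 : γ2*X0^2 + 2*(γ2-P1)*X0 - (P1^2+2*P1-γ2) = 0 := by
    rw [hg2eq]
    linear_combination ((γ1+2)*X0 + (2+P1+γ1)) * hX0g
  -- characterization of feasible powers
  have hchar : ∀ κ' p : ℝ, 0 ≤ κ' → κ' < 1 → 0 ≤ p → Rbar ≤ Ψ p κ' →
      (1+γ2)*((1-κ'^2)*(p*a12)^2) ≤ (p*a12)^2 - 2*(γ2-P1)*(p*a12) + (P1^2+2*P1-γ2)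
        ∧ (p*a12)*κ' ≤ P1 := by
    intro κ' p hk0 hk1 hp0 hpsi
    have hx0 : 0 ≤ p * a12 := mul_nonneg hp0 ha12.le
    have hk2 : 0 < 1 - κ'^2 := by
      have h := mul_le_mul_of_nonneg_left hk1.le hk0
      nlinarith [h]
    have hin : 0 ≤ p*a12*(1-κ'^2)+2 := by linarith [mul_nonneg hx0 hk2.le]
    have hD : 0 < 1 + p*a12*(p*a12*(1-κ'^2)+2) := by linarith [mul_nonneg hx0 hin]
    by_cases hbr : p * κ' * a12 < P1
    · rw [hΨ p κ', if_pos hbr, hR1A] at hpsi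
      have hNpos : 0 < (p*a12 + P1 + 1)^2 := pow_pos (by linarith) 2
      have hND : 1 + γ2 ≤ (p*a12+P1+1)^2 / (1 + p*a12*(p*a12*(1-κ'^2)+2)) := by
        by_contra hcc
        push_neg at hcc
        have hposq : 0 < (p*a12+P1+1)^2 / (1 + p*a12*(p*a12*(1-κ'^2)+2)) :=
          div_pos hNpos hD
        have h := Real.logb_lt_logb (by norm_num : (1:ℝ)<2) hposq hcc
        rw [hlog2] at h
        linarith
      have hND2 : (1+γ2) * (1 + p*a12*(p*a12*(1-κ'^2)+2)) ≤ (p*a12+P1+1)^2 :=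
        (le_div_iff₀ hD).mp hND
      constructor
      · linarith [hND2]
      · have h : p*a12*κ' = p*κ'*a12 := by ring
        linarith
    · exfalso
      push_neg at hbr
      rw [hΨ p κ', if_neg (not_lt.mpr hbr), hR1B] at hpsi
      have hnum : 0 ≤ 2*P1*(p*a12*(1+κ')+1) := by
        linarith [mul_nonneg hP1.le (mul_nonneg hx0 hk0), mul_nonneg hP1.le hx0]
      have hval_pos : 0 < 1 + 2*P1*(p*a12*(1+κ')+1)/(1+p*a12*(p*a12*(1-κ'^2)+2)) := by
        have := div_nonneg hnum hD.le
        linarith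
      have hpoly : 2*P1*(p*a12*(1+κ')+1) < γ2 * (1 + p*a12*(p*a12*(1-κ'^2)+2)) :=
        stmt10_aux_branchB P1 γ2 (p*a12) κ' hP1 h2P hx0 hk0 hk1
      have hval_lt : 1 + 2*P1*(p*a12*(1+κ')+1)/(1+p*a12*(p*a12*(1-κ'^2)+2)) < 1 + γ2 := by
        have h := (div_lt_iff₀ hD).mpr hpoly
        linarith
      have h := Real.logb_lt_logb (by norm_num : (1:ℝ)<2) hval_pos hval_lt
      rw [hlog2] at h
      linarith
  -- value of q at 0
  have hq0eq : q 0 = X0/a12 := by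
    rw [hq 0]
    apply IsGreatest.csSup_eq
    constructor
    · constructor
      · positivity
      · have hbr : X0/a12 * 0 * a12 < P1 := by
          rw [mul_zero, zero_mul]; exact hP1
        rw [hΨ, if_pos hbr, hR1A]
        have hxa : X0/a12*a12 = X0 := div_mul_cancel₀ _ ha12.ne'
        rw [hxa]
        have hDpos : 0 < 1 + X0*(X0*(1-(0:ℝ)^2)+2) := by
          linarith [mul_nonneg hX0pos.le (by linarith [hX0pos] : (0:ℝ) ≤ X0*(1-(0:ℝ)^2)+2)]
        have hNT : (X0+P1+1)^2 = (1+γ2)*(1 + X0*(X0*(1-(0:ℝ)^2)+2)) := by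
          linear_combination (-1) * hrootX0
        rw [hNT, mul_div_assoc, div_self hDpos.ne', mul_one, hlog2]
        ring_nf
        linarith
    · rintro p ⟨hp0, hpsi⟩
      obtain ⟨hA0, -⟩ := hchar 0 p le_rfl one_pos hp0 hpsi
      have hx0 : 0 ≤ p * a12 := mul_nonneg hp0 ha12.le
      have hxle : p*a12 ≤ X0 :=
        stmt10_aux_leX0 P1 γ2 X0 (p*a12) hP1 hx0 hX0pos (by linarith) hrootX0 hA0
      exact (le_div_iff₀ ha12).mpr hxle
  -- main part
  intro κ hκ
  obtain ⟨hκ0, hκ1⟩ := hκ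
  have hκ2 : 0 < 1 - κ^2 := by
    have h := mul_le_mul_of_nonneg_left hκ1.le hκ0
    nlinarith [h]
  have hqκ := hq κ
  have h0S : (0:ℝ) ∈ {p : ℝ | 0 ≤ p ∧ Ψ p κ ≥ Rbar} := by
    refine ⟨le_rfl, ?_⟩
    have hbr : (0:ℝ) * κ * a12 < P1 := by rw [zero_mul, zero_mul]; exact hP1
    rw [hΨ, if_pos hbr, hR1A]
    have e : ((0:ℝ)*a12 + P1 + 1)^2 / (1 + 0*a12*(0*a12*(1-κ^2)+2)) = (1+P1)^2 := by
      rw [zero_mul]; ring_nf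
    rw [e, Real.logb_pow]
    have hlogpos : 0 ≤ Real.logb 2 (1+P1) :=
      Real.logb_nonneg (by norm_num) (by linarith)
    rw [hRbar]
    push_cast
    linarith [mul_nonneg (sub_nonneg.mpr hα1.le) hlogpos]
  have key : ∀ p : ℝ, 0 ≤ p → Rbar ≤ Ψ p κ →
      (1-κ^2)*(p*a12)^2 + 2*a12*(p*a12) ≤ X0^2 + 2*a12*X0 := by
    intro p hp0 hpsi
    obtain ⟨hA, hxκ⟩ := hchar κ p hκ0 hκ1 hp0 hpsi
    have hx0 : 0 ≤ p*a12 := mul_nonneg hp0 ha12.le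
    have hkι := stmt10_aux_key P1 γ1 γ2 σ ι X0 (p*a12) κ hg1pos hg1P hg2eq h2P
      hσ0 hσ2 hιm hιpos hX0g hκ0 hκ1 hx0 hxκ hA
    rcases le_or_gt (p*a12) X0 with h | h
    · have h6 : (p*a12)^2 ≤ X0^2 := pow_le_pow_left₀ hx0 h 2
      linarith [mul_nonneg (sq_nonneg κ) (sq_nonneg (p*a12)),
        mul_nonneg ha12.le (sub_nonneg.mpr h)]
    · have h2 : a12*(p*a12 - X0) ≤ ι*(p*a12-X0) :=
        mul_le_mul_of_nonneg_right ha (by linarith)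
      linarith [hkι]
  set V := X0^2 + 2*a12*X0 with hV
  have hVpos : 0 < V := by
    have h1 := mul_pos ha12 hX0pos
    have h2 := pow_pos hX0pos 2
    rw [hV]; linarith
  set Dr := a12^2 + (1-κ^2)*V with hDr
  have hDrpos : 0 < Dr := by
    have h1 := mul_pos hκ2 hVpos
    rw [hDr]; linarith [sq_nonneg a12]
  have hsq : Real.sqrt Dr ^ 2 = Dr := Real.sq_sqrt hDrpos.le
  have hsge : a12 ≤ Real.sqrt Dr := by
    have h := Real.sqrt_le_sqrt (show a12^2 ≤ Dr by
      rw [hDr]; linarith [mul_pos hκ2 hVpos])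
    rwa [Real.sqrt_sq ha12.le] at h
  set b := (Real.sqrt Dr - a12)/(1-κ^2) with hbdef
  have hb0 : 0 ≤ b := div_nonneg (by linarith) hκ2.le
  have hFb : (1-κ^2)*b^2 + 2*a12*b = V := by
    have e : (1-κ^2)*b = Real.sqrt Dr - a12 := by
      rw [hbdef]
      field_simp
    have hsq' : Real.sqrt Dr^2 = a12^2+(1-κ^2)*V := by rw [hsq, hDr]
    have h2 : ((1-κ^2)*b^2 + 2*a12*b) * (1-κ^2)
        = ((1-κ^2)*b)^2 + 2*a12*((1-κ^2)*b) := by ring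
    rw [e] at h2
    have h3 : (Real.sqrt Dr - a12)^2 + 2*a12*(Real.sqrt Dr - a12) = V * (1-κ^2) := by
      linear_combination hsq'
    rw [h3] at h2
    exact mul_right_cancel₀ hκ2.ne' h2
  have hub : ∀ p ∈ {p : ℝ | 0 ≤ p ∧ Ψ p κ ≥ Rbar}, p ≤ b/a12 := by
    rintro p ⟨hp0, hpsi⟩
    have hk := key p hp0 hpsi
    have hx0 : 0 ≤ p*a12 := mul_nonneg hp0 ha12.le
    have hxle : p*a12 ≤ b :=
      stmt10_aux_mono' (1-κ^2) a12 (p*a12) b hκ2 ha12 hx0 hb0 (by rw [hFb]; exact hk)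
    exact (le_div_iff₀ ha12).mpr hxle
  have hbdd : BddAbove {p : ℝ | 0 ≤ p ∧ Ψ p κ ≥ Rbar} := ⟨b/a12, hub⟩
  have hq0le : 0 ≤ q κ := by rw [hqκ]; exact le_csSup hbdd h0S
  have hqle : q κ ≤ b/a12 := by rw [hqκ]; exact csSup_le ⟨0, h0S⟩ hub
  have hqab : q κ * a12 ≤ b := (le_div_iff₀ ha12).mp hqle
  have hqa0 : 0 ≤ q κ * a12 := mul_nonneg hq0le ha12.le
  have hqa : (1-κ^2)*(q κ*a12)^2 + 2*a12*(q κ*a12) ≤ V := by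
    have h1 := stmt10_aux_mono (1-κ^2) a12 (q κ*a12) b hκ2 ha12 hqa0 hb0 hqab
    rw [hFb] at h1
    exact h1
  -- conclude
  rw [hR2, hR2, hq0eq]
  have hL : 0 < 1 + q κ*(q κ*(1-κ^2)+2) := by
    linarith [mul_nonneg hq0le (mul_nonneg hq0le hκ2.le), mul_nonneg hq0le ha12.le,
      mul_nonneg hq0le (by linarith [mul_nonneg hq0le hκ2.le] : (0:ℝ) ≤ q κ*(1-κ^2)+2)]
  have harg : 1 + q κ*(q κ*(1-κ^2)+2) ≤ 1 + X0/a12*(X0/a12*(1-(0:ℝ)^2)+2) := by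
    have e2 : X0/a12*(X0/a12*(1-(0:ℝ)^2)+2) = V/a12^2 := by
      rw [hV]; field_simp; ring
    have e1 : q κ*(q κ*(1-κ^2)+2)
        = ((1-κ^2)*(q κ*a12)^2 + 2*a12*(q κ*a12))/a12^2 := by
      field_simp
    rw [e1, e2]
    have h := (div_le_div_iff_of_pos_right (show (0:ℝ) < a12^2 by positivity)).mpr hqa
    linarith
  have := Real.logb_le_logb_of_le (by norm_num : (1:ℝ)<2) hL harg
  linarith
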